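/- Multiplication by z maps P_{r,c} continuously into P_{r',c'} whenever r < r' and c ≤ c', provided ln x = o(ω(x)): that is, there is a constant C with ‖z·φ‖_{r',c'} ≤ C‖φ‖_{r,c} for all φ ∈ P_{r,c}. Consequently the inductive limit 𝒫_a is a module over the polynomial ring ℂ[z]. -/
import Mathlib


open Filter

/-- If `ln x = o(ω(x))`, `r < r'` and `c ≤ c'`, then multiplication by `z` maps `P_{r,c}`
continuously into `P_{r',c'}`: there is `C > 0` with `‖z·φ‖_{r',c'} ≤ C‖φ‖_{r,c}`. -/
theorem stmt9 (ω : ℝ → ℝ) (hmono : Monotone ω) (hcont : Continuous ω)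
    (hω0 : ∀ x, 0 ≤ ω x) (hlog : (fun x => Real.log x) =o[atTop] ω)
    (r r' c c' : ℝ) (hr : r < r') (hc : c ≤ c') (hr0 : 0 < r) (hc0 : 0 < c) :
    ∃ C > 0, ∀ φ : ℂ → ℂ,
      BddAbove (Set.range fun z : ℂ => ‖φ z‖ * Real.exp (-(r * ω ‖z‖) - c * |z.im|)) →
      BddAbove (Set.range fun z : ℂ =>
          ‖z * φ z‖ * Real.exp (-(r' * ω ‖z‖) - c' * |z.im|)) ∧
        (⨆ z : ℂ, ‖z * φ z‖ * Real.exp (-(r' * ω ‖z‖) - c' * |z.im|)) ≤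
          C * ⨆ z : ℂ, ‖φ z‖ * Real.exp (-(r * ω ‖z‖) - c * |z.im|) := by
  have hε : (0:ℝ) < r' - r := by linarith
  obtain ⟨X, hX⟩ := eventually_atTop.mp (hlog.def hε)
  set C : ℝ := max X 1 with hC
  have hC1 : (1:ℝ) ≤ C := le_max_right _ _
  have hC0 : (0:ℝ) < C := lt_of_lt_of_le one_pos hC1
  have hkey : ∀ x : ℝ, 0 ≤ x → x ≤ C * Real.exp ((r' - r) * ω x) := by
    intro x hx
    have hexp1 : (1:ℝ) ≤ Real.exp ((r' - r) * ω x) := by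
      rw [← Real.exp_zero]
      exact Real.exp_le_exp.mpr (mul_nonneg hε.le (hω0 x))
    rcases le_or_gt x C with h | h
    · calc x ≤ C := h
        _ = C * 1 := (mul_one C).symm
        _ ≤ C * Real.exp ((r' - r) * ω x) := by
            exact mul_le_mul_of_nonneg_left hexp1 hC0.le
    · have hxX : X ≤ x := le_of_lt (lt_of_le_of_lt (le_max_left _ _) h)
      have := hX x hxX
      have hlogx : Real.log x ≤ (r' - r) * ω x := by
        have h1 : ‖Real.log x‖ ≤ (r' - r) * ‖ω x‖ := this
        rw [Real.norm_eq_abs, Real.norm_eq_abs, abs_of_nonneg (hω0 x)] at h1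
        exact le_trans (le_abs_self _) h1
      have hx1 : (1:ℝ) < x := lt_of_le_of_lt hC1 h
      calc x = Real.exp (Real.log x) := (Real.exp_log (by linarith)).symm
        _ ≤ Real.exp ((r' - r) * ω x) := Real.exp_le_exp.mpr hlogx
        _ = 1 * Real.exp ((r' - r) * ω x) := (one_mul _).symm
        _ ≤ C * Real.exp ((r' - r) * ω x) := by
            exact mul_le_mul_of_nonneg_right hC1 (Real.exp_nonneg _)
  refine ⟨C, hC0, fun φ hφ => ?_⟩
  have hpt : ∀ z : ℂ, ‖z * φ z‖ * Real.exp (-(r' * ω ‖z‖) - c' * |z.im|) ≤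
      C * (‖φ z‖ * Real.exp (-(r * ω ‖z‖) - c * |z.im|)) := by
    intro z
    have hz : ‖z‖ * Real.exp (-(r' * ω ‖z‖) - c' * |z.im|) ≤
        C * Real.exp (-(r * ω ‖z‖) - c * |z.im|) := by
      calc ‖z‖ * Real.exp (-(r' * ω ‖z‖) - c' * |z.im|)
          ≤ (C * Real.exp ((r' - r) * ω ‖z‖)) * Real.exp (-(r' * ω ‖z‖) - c' * |z.im|) :=
            mul_le_mul_of_nonneg_right (hkey ‖z‖ (norm_nonneg z)) (Real.exp_nonneg _)
        _ = C * Real.exp ((r' - r) * ω ‖z‖ + (-(r' * ω ‖z‖) - c' * |z.im|)) := by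
            rw [mul_assoc, ← Real.exp_add]
        _ ≤ C * Real.exp (-(r * ω ‖z‖) - c * |z.im|) := by
            apply mul_le_mul_of_nonneg_left _ hC0.le
            apply Real.exp_le_exp.mpr
            have him : (0:ℝ) ≤ |z.im| := abs_nonneg _
            nlinarith [mul_le_mul_of_nonneg_right hc him]
    calc ‖z * φ z‖ * Real.exp (-(r' * ω ‖z‖) - c' * |z.im|)
        = ‖φ z‖ * (‖z‖ * Real.exp (-(r' * ω ‖z‖) - c' * |z.im|)) := by
          rw [norm_mul]; ring
      _ ≤ ‖φ z‖ * (C * Real.exp (-(r * ω ‖z‖) - c * |z.im|)) :=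
          mul_le_mul_of_nonneg_left hz (norm_nonneg _)
      _ = C * (‖φ z‖ * Real.exp (-(r * ω ‖z‖) - c * |z.im|)) := by ring
  constructor
  · obtain ⟨M, hM⟩ := hφ
    refine ⟨C * M, ?_⟩
    rintro _ ⟨z, rfl⟩
    exact le_trans (hpt z) (mul_le_mul_of_nonneg_left (hM ⟨z, rfl⟩) hC0.le)
  · exact ciSup_le fun z =>
      le_trans (hpt z) (mul_le_mul_of_nonneg_left (le_ciSup hφ z) hC0.le)
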